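/- arXiv:1704.07573 — 10 statements merged into one kernel-verified Lean document; each statement's English description precedes it below -/
import Mathlib

section
/- Let T be a thinning matrix such that T_{n,n} > 0 and T_{n,n-1} > 0 for all n ≥ 1, let ν be a probability distribution on ℕ whose support is an initial segment (if ν_m = 0 for some m then ν_n = 0 for all n ≥ m), and let Q be a condensation matrix for (ν, T). Then for every function g : ℕ → ℝ with g ≥ 0 the integration-by-parts formula holds: ∑_{n ≥ 1} g(n) · (T_{n,n-1} / T_{n-1,n-1}) · ν_n = ∑_{n ≥ 0} g(n+1) · (Q_{n,n+1} / Q_{n,n}) · ν_n. -/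
/-- Integration-by-parts formula: if `T` is a thinning matrix with positive
diagonal and subdiagonal entries, `ν` a probability distribution on `ℕ` whose support is an
initial segment, and `Q` a condensation matrix for `(ν, T)`, then for every nonnegative
`g : ℕ → ℝ`,
`∑_{n ≥ 1} g n * (T n (n-1) / T (n-1) (n-1)) * ν n
  = ∑_{n ≥ 0} g (n+1) * (Q n (n+1) / Q n n) * ν n`. -/
theorem stmt1
    (T : ℕ → ℕ → ℝ)
    (hT0 : ∀ n k, 0 ≤ T n k) (hT1 : ∀ n, ∑' k, T n k = 1)
    (hTtri : ∀ n k, n < k → T n k = 0)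
    (hTdiag : ∀ n : ℕ, 0 < T n n) (hTsub : ∀ n : ℕ, 1 ≤ n → 0 < T n (n - 1))
    (ν : ℕ → ℝ) (hν0 : ∀ n, 0 ≤ ν n) (hν1 : ∑' n, ν n = 1)
    (hsupp : ∀ m n : ℕ, ν m = 0 → m ≤ n → ν n = 0)
    (ν' : ℕ → ℝ) (hν' : ∀ k, ν' k = ∑' n, ν n * T n k)
    (Q : ℕ → ℕ → ℝ)
    (hQ0 : ∀ k n, 0 ≤ Q k n) (hQ1 : ∀ k, ∑' n, Q k n = 1)
    (hbal : ∀ k n, ν' k * Q k n = ν n * T n k)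
    (g : ℕ → ℝ) (hg : ∀ n, 0 ≤ g n) :
    ∑' n : ℕ, g (n + 1) * (T (n + 1) n / T n n) * ν (n + 1)
      = ∑' n : ℕ, g (n + 1) * (Q n (n + 1) / Q n n) * ν n := by
  have hνs : Summable ν := by
    by_contra h; rw [tsum_eq_zero_of_not_summable h] at hν1; norm_num at hν1
  apply tsum_congr
  intro n
  rcases eq_or_lt_of_le (hν0 n) with h0 | hpos
  · have h1 : ν (n + 1) = 0 := hsupp n (n + 1) h0.symm (by omega)
    rw [h1, ← h0]; ring
  · have hTle : ∀ m k, T m k ≤ 1 := by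
      intro m k
      have hs : Summable (T m) := by
        by_contra h
        have h1 := hT1 m
        rw [tsum_eq_zero_of_not_summable h] at h1; norm_num at h1
      calc T m k ≤ ∑' j, T m j := Summable.le_tsum hs k (fun j _ => hT0 m j)
        _ = 1 := hT1 m
    have hsum : Summable (fun m => ν m * T m n) :=
      Summable.of_nonneg_of_le (fun m => mul_nonneg (hν0 m) (hT0 m n))
        (fun m => mul_le_of_le_one_right (hν0 m) (hTle m n)) hνs
    have hν'pos : 0 < ν' n := by
      rw [hν' n]
      calc (0:ℝ) < ν n * T n n := mul_pos hpos (hTdiag n)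
        _ ≤ ∑' m, ν m * T m n := Summable.le_tsum hsum n (fun m _ => mul_nonneg (hν0 m) (hT0 m n))
    have hQnn : Q n n = ν n * T n n / ν' n := by
      have := hbal n n; field_simp; linarith [this]
    have hQn1 : Q n (n + 1) = ν (n + 1) * T (n + 1) n / ν' n := by
      have := hbal n (n + 1); field_simp; linarith [this]
    rw [hQnn, hQn1]
    have h1 : T n n ≠ 0 := (hTdiag n).ne'
    have h2 : ν n ≠ 0 := hpos.ne'
    have h3 : ν' n ≠ 0 := hν'pos.ne'
    field_simp
end

section
/- Let ν be a probability distribution on ℕ, T a thinning matrix, and Q a condensation matrix for (ν, T). Then for all n, k, i, j ∈ ℕ such that j ≥ n, i ≤ j, i ≤ n and ν'_i > 0 (where ν' = νT), the alternating cycle condition for the thinned distribution holds: Q_{i,j} · T_{j,k} · Q_{k,n} · T_{n,i} = Q_{i,n} · T_{n,k} · Q_{k,j} · T_{j,i}. -/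
/-- Alternating cycle condition for the thinned distribution `ν' = νT`:
if `Q` is a condensation matrix for `(ν, T)`, then for all `n k i j` with `j ≥ n`, `i ≤ j`,
`i ≤ n` and `ν' i > 0`,
`Q i j * T j k * Q k n * T n i = Q i n * T n k * Q k j * T j i`. -/
theorem stmt4
    (T : ℕ → ℕ → ℝ)
    (hT0 : ∀ n k, 0 ≤ T n k) (hT1 : ∀ n, ∑' k, T n k = 1)
    (hTtri : ∀ n k, n < k → T n k = 0)
    (ν : ℕ → ℝ) (hν0 : ∀ n, 0 ≤ ν n) (hν1 : ∑' n, ν n = 1)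
    (ν' : ℕ → ℝ) (hν' : ∀ k, ν' k = ∑' n, ν n * T n k)
    (Q : ℕ → ℕ → ℝ)
    (hQ0 : ∀ k n, 0 ≤ Q k n) (hQ1 : ∀ k, ∑' n, Q k n = 1)
    (hbal : ∀ k n, ν' k * Q k n = ν n * T n k) :
    ∀ n k i j : ℕ, n ≤ j → i ≤ j → i ≤ n → 0 < ν' i →
      Q i j * T j k * Q k n * T n i = Q i n * T n k * Q k j * T j i := by
  intro n k i j _ _ _ hpos
  have hνsum : Summable ν := by
    by_contra h
    rw [tsum_eq_zero_of_not_summable h] at hν1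
    norm_num at hν1
  have hTle : ∀ m l, T m l ≤ 1 := by
    intro m l
    have hs : Summable (fun l => T m l) := by
      by_contra h
      have := hT1 m
      rw [tsum_eq_zero_of_not_summable h] at this
      norm_num at this
    calc T m l ≤ ∑' l, T m l := Summable.le_tsum hs l (fun j _ => hT0 m j)
    _ = 1 := hT1 m
  have h1 : ν' i * Q i j = ν j * T j i := hbal i j
  have h3 : ν' i * Q i n = ν n * T n i := hbal i n
  have key : ν' i * (Q i j * T j k * Q k n * T n i)
      = ν' i * (Q i n * T n k * Q k j * T j i) := by
    rcases (le_or_gt (ν' k) 0) with hk | hk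
    · -- ν' k ≤ 0, in fact ν' k = 0, so all ν m * T m k = 0
      have hsum : Summable (fun m => ν m * T m k) := by
        apply Summable.of_nonneg_of_le (fun m => mul_nonneg (hν0 m) (hT0 m k))
          (fun m => ?_) hνsum
        calc ν m * T m k ≤ ν m * 1 := by
              exact mul_le_mul_of_nonneg_left (hTle m k) (hν0 m)
        _ = ν m := mul_one _
      have hterm : ∀ m, ν m * T m k = 0 := by
        intro m
        have hle : ν m * T m k ≤ ν' k := by
          rw [hν' k]
          exact Summable.le_tsum hsum m (fun j _ => mul_nonneg (hν0 j) (hT0 j k))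
        have := mul_nonneg (hν0 m) (hT0 m k)
        linarith
      have hjz : ν j * T j k = 0 := hterm j
      have hnz : ν n * T n k = 0 := hterm n
      calc ν' i * (Q i j * T j k * Q k n * T n i)
          = (ν' i * Q i j) * T j k * (Q k n * T n i) := by ring
        _ = (ν j * T j i) * T j k * (Q k n * T n i) := by rw [h1]
        _ = (ν j * T j k) * (T j i * Q k n * T n i) := by ring
        _ = 0 := by rw [hjz]; ring
        _ = (ν n * T n k) * (T n i * Q k j * T j i) := by rw [hnz]; ring
        _ = (ν n * T n i) * T n k * (Q k j * T j i) := by ring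
        _ = (ν' i * Q i n) * T n k * (Q k j * T j i) := by rw [h3]
        _ = ν' i * (Q i n * T n k * Q k j * T j i) := by ring
    · -- ν' k > 0 : multiply by ν' k and cancel
      have h2 : ν' k * Q k n = ν n * T n k := hbal k n
      have h4 : ν' k * Q k j = ν j * T j k := hbal k j
      have hmul : ν' k * (ν' i * (Q i j * T j k * Q k n * T n i))
          = ν' k * (ν' i * (Q i n * T n k * Q k j * T j i)) := by
        calc ν' k * (ν' i * (Q i j * T j k * Q k n * T n i))
            = (ν' i * Q i j) * (ν' k * Q k n) * (T j k * T n i) := by ring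
          _ = (ν j * T j i) * (ν n * T n k) * (T j k * T n i) := by rw [h1, h2]
          _ = (ν n * T n i) * (ν j * T j k) * (T n k * T j i) := by ring
          _ = (ν' i * Q i n) * (ν' k * Q k j) * (T n k * T j i) := by rw [h3, h4]
          _ = ν' k * (ν' i * (Q i n * T n k * Q k j * T j i)) := by ring
      exact mul_left_cancel₀ (ne_of_gt hk) hmul
  exact mul_left_cancel₀ (ne_of_gt hpos) key
end

section
/- Let T be a positive thinning matrix (T_{n,k} > 0 for all k ≤ n) and Q an abstract condensation matrix with Q_{n,n} > 0 for all n, such that T and Q satisfy the alternating cycle condition T_{n,i} · Q_{i,j} · T_{j,k} · Q_{k,n} = T_{n,k} · Q_{k,j} · T_{j,i} · Q_{i,n} for all i, j, k, n ∈ ℕ. Define ν : ℕ → ℝ recursively by ν_0 = 1 and ν_n = ν_{n-1} · (T_{n-1,n-1} / T_{n,n-1}) · (Q_{n-1,n} / Q_{n-1,n-1}) for n ≥ 1, and let n₀ ∈ ℕ ∪ {∞} be the smallest index with Q_{n₀,n₀+1} = 0 (with n₀ = ∞ if no such index exists). Then ν_n > 0 for all n ≤ n₀, ν_n = 0 for all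 n > n₀, and ν satisfies the balance equations ν_n · T_{n,k} = ν'_k · Q_{k,n} for all n, k ≤ n₀, where ν'_k = ∑_j ν_j · T_{j,k}. -/
/-- Let `T` be a positive thinning matrix and `Q` an abstract condensation
matrix with positive diagonal satisfying the alternating cycle condition. Define `ν`
recursively by `ν 0 = 1` and
`ν n = ν (n-1) * (T (n-1) (n-1) / T n (n-1)) * (Q (n-1) n / Q (n-1) (n-1))`,
and let `n₀ ∈ ℕ ∪ {∞}` be the smallest index with `Q n₀ (n₀+1) = 0`. Then `ν n > 0` for all
`n ≤ n₀`, `ν n = 0` for all `n > n₀`, and `ν` satisfies the balance equations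
`ν n * T n k = ν' k * Q k n` for all `n, k ≤ n₀`, where `ν' k = ∑_j ν j * T j k`. -/
theorem stmt5
    (T Q : ℕ → ℕ → ℝ)
    (hTpos : ∀ n k : ℕ, k ≤ n → 0 < T n k) (hT1 : ∀ n, ∑' k, T n k = 1)
    (hTtri : ∀ n k, n < k → T n k = 0)
    (hQ0 : ∀ k n, 0 ≤ Q k n) (hQ1 : ∀ k, ∑' n, Q k n = 1)
    (hQtri : ∀ k n, n < k → Q k n = 0)
    (hQdiag : ∀ n, 0 < Q n n)
    (hcycle : ∀ i j k n : ℕ,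
      T n i * Q i j * T j k * Q k n = T n k * Q k j * T j i * Q i n)
    (ν : ℕ → ℝ) (hν0 : ν 0 = 1)
    (hνrec : ∀ n : ℕ,
      ν (n + 1) = ν n * (T n n / T (n + 1) n) * (Q n (n + 1) / Q n n))
    (n₀ : ℕ∞)
    (hn₀1 : ∀ m : ℕ, (m : ℕ∞) < n₀ → Q m (m + 1) ≠ 0)
    (hn₀2 : ∀ m : ℕ, (m : ℕ∞) = n₀ → Q m (m + 1) = 0) :
    (∀ n : ℕ, (n : ℕ∞) ≤ n₀ → 0 < ν n) ∧
    (∀ n : ℕ, n₀ < (n : ℕ∞) → ν n = 0) ∧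
    (∀ n k : ℕ, (n : ℕ∞) ≤ n₀ → (k : ℕ∞) ≤ n₀ →
      ν n * T n k = (∑' j, ν j * T j k) * Q k n) := by
  -- strict positivity of off-diagonal Q below n₀
  have hQstep : ∀ m : ℕ, (m : ℕ∞) < n₀ → 0 < Q m (m + 1) := fun m hm =>
    (hQ0 m (m + 1)).lt_of_ne (Ne.symm (hn₀1 m hm))
  -- Claim 1: positivity
  have hνpos : ∀ n : ℕ, (n : ℕ∞) ≤ n₀ → 0 < ν n := by
    intro n
    induction n with
    | zero => intro _; rw [hν0]; norm_num
    | succ m ih =>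
      intro h
      have hmlt : (m : ℕ∞) < n₀ :=
        lt_of_lt_of_le (by exact_mod_cast Nat.lt_succ_self m) h
      have hm : (m : ℕ∞) ≤ n₀ := hmlt.le
      have hQm := hQstep m hmlt
      rw [hνrec m]
      have h1 := hTpos m m le_rfl
      have h2 := hTpos (m + 1) m (Nat.le_succ m)
      have h3 := hQdiag m
      have h4 := ih hm
      positivity
  -- Claim 2: vanishing
  have hνzero : ∀ n : ℕ, n₀ < (n : ℕ∞) → ν n = 0 := by
    intro n hn
    have hne : n₀ ≠ ⊤ := ne_top_of_lt hn
    lift n₀ to ℕ using hne with m₀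
    have hmn : m₀ < n := by exact_mod_cast hn
    have hQ := hn₀2 m₀ rfl
    have base : ν (m₀ + 1) = 0 := by rw [hνrec m₀, hQ, zero_div, mul_zero]
    have tail : ∀ j : ℕ, ν (m₀ + 1 + j) = 0 := by
      intro j
      induction j with
      | zero => exact base
      | succ i ih => rw [show m₀ + 1 + (i + 1) = (m₀ + 1 + i) + 1 by ring,
          hνrec (m₀ + 1 + i), ih, zero_mul, zero_mul]
    obtain ⟨j, rfl⟩ : ∃ j, n = m₀ + 1 + j := ⟨n - m₀ - 1, by omega⟩
    exact tail j
  -- Detailed balance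
  have hdb : ∀ n : ℕ, (n : ℕ∞) ≤ n₀ → ∀ k, k ≤ n →
      ν n * T n k * Q k k = ν k * T k k * Q k n := by
    intro n hn
    have key : ∀ d k, k + d = n → ν n * T n k * Q k k = ν k * T k k * Q k n := by
      intro d
      induction d with
      | zero =>
        intro k hk
        have hkn : k = n := by omega
        subst hkn; ring
      | succ d ih =>
        intro k hk
        have IH := ih (k + 1) (by omega)
        have hkn : k + 1 ≤ n := by omega
        have hklt : (k : ℕ∞) < n₀ :=
          lt_of_lt_of_le (by exact_mod_cast (by omega : k < n)) hn
        have hk1le : ((k + 1 : ℕ) : ℕ∞) ≤ n₀ :=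
          le_trans (by exact_mod_cast hkn) hn
        have hQk := hQstep k hklt
        have hQkk := hQdiag k
        have hQk1 := hQdiag (k + 1)
        have hT1k := hTpos (k + 1) k (Nat.le_succ k)
        have hT11 := hTpos (k + 1) (k + 1) le_rfl
        have hTnk1 := hTpos n (k + 1) hkn
        have hνn := hνpos n hn
        have hνk1 := hνpos (k + 1) hk1le
        have E1 := hcycle k (k + 1) (k + 1) n
        -- E1 : T n k * Q k (k+1) * T (k+1) (k+1) * Q (k+1) n
        --    = T n (k+1) * Q (k+1) (k+1) * T (k+1) k * Q k n
        -- IH : ν n * T n (k+1) * Q (k+1) (k+1) = ν (k+1) * T (k+1) (k+1) * Q (k+1) n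
        have E3 : ν (k + 1) * T (k + 1) k * Q k k = ν k * T k k * Q k (k + 1) := by
          rw [hνrec k]; field_simp
        have hQ1npos : 0 < Q (k + 1) n := by
          rcases (hQ0 (k + 1) n).lt_or_eq with h | h
          · exact h
          · exfalso
            have hL : 0 < ν n * T n (k + 1) * Q (k + 1) (k + 1) := by positivity
            rw [IH, ← h, mul_zero] at hL
            exact lt_irrefl 0 hL
        have step1 : ν n * T n k * Q k (k + 1) = ν (k + 1) * T (k + 1) k * Q k n := by
          have hne : T (k + 1) (k + 1) * Q (k + 1) n ≠ 0 := by positivity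
          apply mul_left_cancel₀ hne
          linear_combination ν n * E1 + T (k + 1) k * Q k n * IH
        apply mul_left_cancel₀ (show Q k (k + 1) ≠ 0 from ne_of_gt hQk)
        linear_combination Q k k * step1 + Q k n * E3
    intro k hk
    exact key (n - k) k (by omega)
  -- Tail lemma: Q k m = 0 for k ≤ n₀ < m
  have htail : ∀ m₀ : ℕ, (m₀ : ℕ∞) = n₀ → ∀ k ≤ m₀, ∀ m, m₀ < m → Q k m = 0 := by
    intro m₀ hm₀ k hk m hm
    have hQ := hn₀2 m₀ hm₀
    have hQm₀ : Q m₀ m = 0 := by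
      have E := hcycle (m₀ + 1) (m₀ + 1) m₀ m
      -- T m (m₀+1) * Q (m₀+1) (m₀+1) * T (m₀+1) m₀ * Q m₀ m
      --   = T m m₀ * Q m₀ (m₀+1) * T (m₀+1) (m₀+1) * Q (m₀+1) m
      rw [hQ] at E
      have h1 := hTpos m (m₀ + 1) (by omega)
      have h2 := hQdiag (m₀ + 1)
      have h3 := hTpos (m₀ + 1) m₀ (Nat.le_succ m₀)
      have := E
      nlinarith [hQ0 m₀ m, mul_pos (mul_pos h1 h2) h3]
    rcases Nat.lt_or_ge k m₀ with hlt | hge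
    · have E := hcycle m₀ m₀ k m
      rw [hQm₀] at E
      have h1 := hTpos m m₀ (by omega)
      have h2 := hQdiag m₀
      have h3 := hTpos m₀ k hk
      nlinarith [hQ0 k m, mul_pos (mul_pos h1 h2) h3]
    · obtain rfl : k = m₀ := by omega
      exact hQm₀
  -- pointwise identity
  have hpoint : ∀ k : ℕ, (k : ℕ∞) ≤ n₀ → ∀ j : ℕ,
      ν j * T j k = ν k * T k k / Q k k * Q k j := by
    intro k hk j
    rcases Nat.lt_or_ge j k with hjk | hjk
    · rw [hTtri j k hjk, hQtri k j hjk, mul_zero, mul_zero]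
    · rcases le_or_gt (j : ℕ∞) n₀ with hj | hj
      · have := hdb j hj k hjk
        have hQkk := (hQdiag k).ne'
        field_simp
        linarith [this]
      · have hν := hνzero j hj
        have hne : n₀ ≠ ⊤ := ne_top_of_lt hj
        obtain ⟨m₀, hm₀⟩ : ∃ m₀ : ℕ, (m₀ : ℕ∞) = n₀ := by
          lift n₀ to ℕ using hne with m₀
          exact ⟨m₀, rfl⟩
        rw [← hm₀] at hk hj
        have hkm : k ≤ m₀ := by exact_mod_cast hk
        have hjm : m₀ < j := by exact_mod_cast hj
        rw [hν, htail m₀ hm₀ k hkm j hjm, zero_mul, mul_zero]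
  refine ⟨hνpos, hνzero, ?_⟩
  intro n k hn hk
  have hsum : ∑' j, ν j * T j k = ν k * T k k / Q k k := by
    calc ∑' j, ν j * T j k = ∑' j, ν k * T k k / Q k k * Q k j :=
          tsum_congr (hpoint k hk)
      _ = ν k * T k k / Q k k * ∑' j, Q k j := tsum_mul_left
      _ = ν k * T k k / Q k k := by rw [hQ1 k, mul_one]
  rw [hsum]
  exact hpoint k hk n
end

section
/- Let T be a positive thinning matrix (T_{n,k} > 0 for all k ≤ n) and Q an abstract condensation matrix with Q_{n,n} > 0 for all n, such that T and Q satisfy the alternating cycle condition T_{n,i} · Q_{i,j} · T_{j,k} · Q_{k,n} = T_{n,k} · Q_{k,j} · T_{j,i} · Q_{i,n} for all i, j, k, n ∈ ℕ. Define ν : ℕ → ℝ recursively by ν_0 = 1 and ν_n = ν_{n-1} · (T_{n-1,n-1} / T_{n,n-1}) · (Q_{n-1,n} / Q_{n-1,n-1}) for n ≥ 1. Then for all k < n such that Q_{j,j+1} > 0 for every j < n, one has ν_n · T_{n,k} · Q_{k,k} = ν_k · T_{k,k} · Q_{k,n}. -/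
/-- With `T` a positive thinning matrix, `Q` an abstract condensation
matrix with positive diagonal satisfying the alternating cycle condition, and `ν` defined
by the recursion `ν 0 = 1`,
`ν n = ν (n-1) * (T (n-1) (n-1) / T n (n-1)) * (Q (n-1) n / Q (n-1) (n-1))`:
for all `k < n` such that `Q j (j+1) > 0` for every `j < n`, one has
`ν n * T n k * Q k k = ν k * T k k * Q k n`. -/
theorem stmt6
    (T Q : ℕ → ℕ → ℝ)
    (hTpos : ∀ n k : ℕ, k ≤ n → 0 < T n k) (hT1 : ∀ n, ∑' k, T n k = 1)
    (hTtri : ∀ n k, n < k → T n k = 0)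
    (hQ0 : ∀ k n, 0 ≤ Q k n) (hQ1 : ∀ k, ∑' n, Q k n = 1)
    (hQtri : ∀ k n, n < k → Q k n = 0)
    (hQdiag : ∀ n, 0 < Q n n)
    (hcycle : ∀ i j k n : ℕ,
      T n i * Q i j * T j k * Q k n = T n k * Q k j * T j i * Q i n)
    (ν : ℕ → ℝ) (hν0 : ν 0 = 1)
    (hνrec : ∀ n : ℕ,
      ν (n + 1) = ν n * (T n n / T (n + 1) n) * (Q n (n + 1) / Q n n)) :
    ∀ k n : ℕ, k < n → (∀ j : ℕ, j < n → 0 < Q j (j + 1)) →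
      ν n * T n k * Q k k = ν k * T k k * Q k n := by
  intro k n
  induction n with
  | zero => omega
  | succ n ih =>
    intro hk hQsup
    have hTn1 : T (n + 1) n ≠ 0 := ne_of_gt (hTpos _ _ (by omega))
    have hQnn : Q n n ≠ 0 := ne_of_gt (hQdiag n)
    rcases Nat.lt_succ_iff_lt_or_eq.mp hk with hk' | rfl
    · have IH := ih hk' (fun j hj => hQsup j (by omega))
      have C := hcycle k n n (n + 1)
      have hTnk : T n k ≠ 0 := ne_of_gt (hTpos _ _ (le_of_lt hk'))
      have h2 : (ν (n + 1) * T (n + 1) k * Q k k) * T n k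
          = (ν k * T k k * Q k (n + 1)) * T n k := by
        rw [hνrec n]
        field_simp
        apply mul_right_cancel₀ hTnk
        linear_combination (ν k * T k k) * C + (T (n + 1) k * T n n * Q n (n + 1)) * IH
      exact mul_right_cancel₀ hTnk h2
    · rw [hνrec k]
      field_simp
end

section
/- Let T be a positive thinning matrix (T_{n,k} > 0 for all k ≤ n) and Q an abstract condensation matrix with Q_{n,n} > 0 for all n, such that T and Q satisfy the alternating cycle condition T_{n,i} · Q_{i,j} · T_{j,k} · Q_{k,n} = T_{n,k} · Q_{k,j} · T_{j,i} · Q_{i,n} for all i, j, k, n ∈ ℕ. Define ν : ℕ → ℝ recursively by ν_0 = 1 and ν_n = ν_{n-1} · (T_{n-1,n-1} / T_{n,n-1}) · (Q_{n-1,n} / Q_{n-1,n-1}) for n ≥ 1, and let n₀ ∈ ℕ ∪ {∞} be the smallest index with Q_{n₀,n₀+1} = 0 (with n₀ = ∞ if no such index exists). Then for all j, k, n ≤ n₀ with k ≤ n, one has ν_j · T_{j,k} · Q_{k,n} = ν_n · T_{n,k} · Q_{k,j}. -/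
/-- With `T` a positive thinning matrix, `Q` an abstract condensation
matrix with positive diagonal satisfying the alternating cycle condition, `ν` defined by
the recursion `ν 0 = 1`,
`ν n = ν (n-1) * (T (n-1) (n-1) / T n (n-1)) * (Q (n-1) n / Q (n-1) (n-1))`,
and `n₀ ∈ ℕ ∪ {∞}` the smallest index with `Q n₀ (n₀+1) = 0`: for all `j, k, n ≤ n₀` with
`k ≤ n`, one has `ν j * T j k * Q k n = ν n * T n k * Q k j`. -/
theorem stmt7
    (T Q : ℕ → ℕ → ℝ)
    (hTpos : ∀ n k : ℕ, k ≤ n → 0 < T n k) (hT1 : ∀ n, ∑' k, T n k = 1)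
    (hTtri : ∀ n k, n < k → T n k = 0)
    (hQ0 : ∀ k n, 0 ≤ Q k n) (hQ1 : ∀ k, ∑' n, Q k n = 1)
    (hQtri : ∀ k n, n < k → Q k n = 0)
    (hQdiag : ∀ n, 0 < Q n n)
    (hcycle : ∀ i j k n : ℕ,
      T n i * Q i j * T j k * Q k n = T n k * Q k j * T j i * Q i n)
    (ν : ℕ → ℝ) (hν0 : ν 0 = 1)
    (hνrec : ∀ n : ℕ,
      ν (n + 1) = ν n * (T n n / T (n + 1) n) * (Q n (n + 1) / Q n n))
    (n₀ : ℕ∞)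
    (hn₀1 : ∀ m : ℕ, (m : ℕ∞) < n₀ → Q m (m + 1) ≠ 0)
    (hn₀2 : ∀ m : ℕ, (m : ℕ∞) = n₀ → Q m (m + 1) = 0) :
    ∀ j k n : ℕ, (j : ℕ∞) ≤ n₀ → (k : ℕ∞) ≤ n₀ → (n : ℕ∞) ≤ n₀ → k ≤ n →
      ν j * T j k * Q k n = ν n * T n k * Q k j := by
  -- n < n₀ from (n+1 : ℕ) ≤ n₀
  have hlt : ∀ n : ℕ, ((n + 1 : ℕ) : ℕ∞) ≤ n₀ → (n : ℕ∞) < n₀ := by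
    intro n h
    refine lt_of_lt_of_le ?_ h
    exact_mod_cast Nat.lt_succ_self n
  -- positivity of ν along [0, n₀]
  have hνpos : ∀ n : ℕ, (n : ℕ∞) ≤ n₀ → 0 < ν n := by
    intro n
    induction n with
    | zero => intro _; rw [hν0]; norm_num
    | succ m ih =>
      intro h
      have hm : (m : ℕ∞) ≤ n₀ := le_of_lt (hlt m h)
      have hq : 0 < Q m (m + 1) := (hQ0 m (m + 1)).lt_of_ne' (hn₀1 m (hlt m h))
      rw [hνrec]
      have := hTpos m m le_rfl
      have := hTpos (m + 1) m (Nat.le_succ m)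
      have := hQdiag m
      have := ih hm
      positivity
  -- base detailed balance: j = k case
  have hB : ∀ n : ℕ, (n : ℕ∞) ≤ n₀ → ∀ k : ℕ, k ≤ n →
      ν n * T n k * Q k k = ν k * T k k * Q k n := by
    intro n
    induction n with
    | zero =>
      intro _ k hk
      interval_cases k
      ring
    | succ m ih =>
      intro h k hk
      rcases Nat.lt_succ_iff_lt_or_eq.mp (Nat.lt_succ_of_le hk) with hk' | rfl
      · have hkm' : k ≤ m := Nat.lt_succ_iff.mp hk'
        have hm : (m : ℕ∞) ≤ n₀ := le_of_lt (hlt m h)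
        have IH := ih hm k hkm'
        -- Q k m ≠ 0
        have hpos : 0 < ν m * T m k * Q k k :=
          mul_pos (mul_pos (hνpos m hm) (hTpos m k hkm')) (hQdiag k)
        have hQkm : Q k m ≠ 0 := by
          intro h0
          rw [h0, mul_zero] at IH
          exact hpos.ne' (IH ▸ rfl)
        have hT1m : T (m + 1) m ≠ 0 := (hTpos (m + 1) m (Nat.le_succ m)).ne'
        have hQmm : Q m m ≠ 0 := (hQdiag m).ne'
        have hcyc := hcycle k m m (m + 1)
        rw [hνrec]
        field_simp
        refine mul_right_cancel₀ hQkm ?_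
        linear_combination (ν m * Q k k) * hcyc + (T (m + 1) m * Q m m * Q k (m + 1)) * IH
      · ring
  -- main statement
  intro j k n hj hk hn hkn
  rcases le_or_gt k j with hkj | hjk
  · have h1 := hB j hj k hkj
    have h2 := hB n hn k hkn
    have hQkk : Q k k ≠ 0 := (hQdiag k).ne'
    have : ν j * T j k * Q k n * Q k k = ν n * T n k * Q k j * Q k k := by
      calc ν j * T j k * Q k n * Q k k = (ν j * T j k * Q k k) * Q k n := by ring
        _ = (ν k * T k k * Q k j) * Q k n := by rw [h1]
        _ = (ν k * T k k * Q k n) * Q k j := by ring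
        _ = (ν n * T n k * Q k k) * Q k j := by rw [h2]
        _ = ν n * T n k * Q k j * Q k k := by ring
    exact mul_right_cancel₀ hQkk this
  · rw [hTtri j k hjk, hQtri k j hjk]
    ring
end

section
/- Fix q ∈ (0,1) and let T be the independent q-thinning matrix, T_{n,k} = C(n,k) · q^k · (1-q)^{n-k} for k ≤ n and T_{n,k} = 0 for k > n. Let ν be a probability distribution on ℕ whose support is an initial segment (if ν_m = 0 for some m then ν_n = 0 for all n ≥ m), and let Q be a condensation matrix for (ν, T). Then (i) for every n ≥ 1 with ν_{n-1} > 0, (1-q) · n · ν_n = ν_{n-1} · (Q_{n-1,n} / Q_{n-1,n-1}); and (ii) ν satisfies the integration-by-parts formula with Papangelou function π(n) = Q_{n,n+1} / ((1-q) · Q_{n,n}): for every g : ℕ → ℝ with g ≥ 0, ∑_{n ≥ 1} g(n) · n · ν_n = ∑_{n ≥ 0} g(n+1) · π(n) · ν_n. -/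
/-- For the independent `q`-thinning matrix
`T n k = C(n,k) q^k (1-q)^(n-k)` (and `0` for `k > n`), a probability distribution `ν` whose
support is an initial segment, and a condensation matrix `Q` for `(ν, T)`:
(i) for every `n ≥ 1` with `ν (n-1) > 0`,
`(1-q) * n * ν n = ν (n-1) * (Q (n-1) n / Q (n-1) (n-1))`; and
(ii) the integration-by-parts formula with Papangelou function
`π n = Q n (n+1) / ((1-q) * Q n n)` holds: for every nonnegative `g`,
`∑_{n ≥ 1} g n * n * ν n = ∑_{n ≥ 0} g (n+1) * π n * ν n`. -/
theorem stmt9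
    (q : ℝ) (hq : q ∈ Set.Ioo (0 : ℝ) 1)
    (T : ℕ → ℕ → ℝ)
    (hT : ∀ n k : ℕ, T n k =
      if k ≤ n then (n.choose k : ℝ) * q ^ k * (1 - q) ^ (n - k) else 0)
    (ν : ℕ → ℝ) (hν0 : ∀ n, 0 ≤ ν n) (hν1 : ∑' n, ν n = 1)
    (hsupp : ∀ m n : ℕ, ν m = 0 → m ≤ n → ν n = 0)
    (ν' : ℕ → ℝ) (hν' : ∀ k, ν' k = ∑' n, ν n * T n k)
    (Q : ℕ → ℕ → ℝ)
    (hQ0 : ∀ k n, 0 ≤ Q k n) (hQ1 : ∀ k, ∑' n, Q k n = 1)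
    (hbal : ∀ k n, ν' k * Q k n = ν n * T n k) :
    (∀ n : ℕ, 1 ≤ n → 0 < ν (n - 1) →
      (1 - q) * (n : ℝ) * ν n = ν (n - 1) * (Q (n - 1) n / Q (n - 1) (n - 1))) ∧
    (∀ g : ℕ → ℝ, (∀ n, 0 ≤ g n) →
      ∑' n : ℕ, g (n + 1) * ((n : ℝ) + 1) * ν (n + 1)
        = ∑' n : ℕ, g (n + 1) * (Q n (n + 1) / ((1 - q) * Q n n)) * ν n) := by

  have h1q : (1 : ℝ) - q ≠ 0 := by
    have := hq.2; linarith
  have key : ∀ n : ℕ, 0 < ν n →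
      Q n n ≠ 0 ∧ (1 - q) * ((n : ℝ) + 1) * ν (n + 1) = ν n * (Q n (n + 1) / Q n n) := by
    intro n hpos
    have hT1 : T n n = q ^ n := by rw [hT]; simp
    have hT2 : T (n + 1) n = ((n : ℝ) + 1) * q ^ n * (1 - q) := by
      rw [hT]
      simp [Nat.choose_succ_self_right]
    have h1 := hbal n n
    rw [hT1] at h1
    have h2 := hbal n (n + 1)
    rw [hT2] at h2
    have hqn : 0 < q ^ n := pow_pos hq.1 n
    have hprod : 0 < ν' n * Q n n := by rw [h1]; positivity
    have hQnn : Q n n ≠ 0 := by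
      intro h; rw [h, mul_zero] at hprod; exact lt_irrefl 0 hprod
    have hν'n : ν' n ≠ 0 := by
      intro h; rw [h, zero_mul] at hprod; exact lt_irrefl 0 hprod
    refine ⟨hQnn, ?_⟩
    rw [mul_div_assoc', eq_div_iff hQnn]
    apply mul_left_cancel₀ hν'n
    linear_combination ((1 - q) * ((n : ℝ) + 1) * ν (n + 1)) * h1 - ν n * h2
  constructor
  · intro n hn hpos
    obtain ⟨m, rfl⟩ : ∃ m, n = m + 1 := ⟨n - 1, (Nat.succ_pred_eq_of_pos hn).symm⟩
    simp only [Nat.add_sub_cancel] at hpos ⊢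
    have := (key m hpos).2
    push_cast
    convert this using 2
  · intro g hg
    refine tsum_congr fun n => ?_
    rcases (hν0 n).lt_or_eq with hpos | hzero
    · obtain ⟨hQnn, heq⟩ := key n hpos
      field_simp at heq ⊢
      linear_combination g (n + 1) * heq
    · have hz : ν n = 0 := hzero.symm
      have hz1 : ν (n + 1) = 0 := hsupp n (n + 1) hz (by omega)
      simp [hz, hz1]
end

section
/- Let T be the uniform thinning matrix, T_{n,k} = 1/(n+1) for k ≤ n and T_{n,k} = 0 for k > n. Let ν be a probability distribution on ℕ whose support is an initial segment (if ν_m = 0 for some m then ν_n = 0 for all n ≥ m), and let Q be a condensation matrix for (ν, T). Then (i) for every n ≥ 1 with ν_{n-1} > 0, (n/(n+1)) · ν_n = ν_{n-1} · (Q_{n-1,n} / Q_{n-1,n-1}); and (ii) for every n ≥ 1 with ν_{n-1} > 0, ν_n = (n+1) · ν_0 · ∏_{j=0}^{n-1} (Q_{j,j+1} / Q_{j,j}). -/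
/-- For the uniform thinning matrix `T n k = 1/(n+1)` for `k ≤ n`
(and `0` for `k > n`), a probability distribution `ν` whose support is an initial segment,
and a condensation matrix `Q` for `(ν, T)`:
(i) for every `n ≥ 1` with `ν (n-1) > 0`,
`(n/(n+1)) * ν n = ν (n-1) * (Q (n-1) n / Q (n-1) (n-1))`; and
(ii) for every `n ≥ 1` with `ν (n-1) > 0`,
`ν n = (n+1) * ν 0 * ∏_{j=0}^{n-1} (Q j (j+1) / Q j j)`. -/
theorem stmt10
    (T : ℕ → ℕ → ℝ)
    (hT : ∀ n k : ℕ, T n k = if k ≤ n then 1 / ((n : ℝ) + 1) else 0)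
    (ν : ℕ → ℝ) (hν0 : ∀ n, 0 ≤ ν n) (hν1 : ∑' n, ν n = 1)
    (hsupp : ∀ m n : ℕ, ν m = 0 → m ≤ n → ν n = 0)
    (ν' : ℕ → ℝ) (hν' : ∀ k, ν' k = ∑' n, ν n * T n k)
    (Q : ℕ → ℕ → ℝ)
    (hQ0 : ∀ k n, 0 ≤ Q k n) (hQ1 : ∀ k, ∑' n, Q k n = 1)
    (hbal : ∀ k n, ν' k * Q k n = ν n * T n k) :
    (∀ n : ℕ, 1 ≤ n → 0 < ν (n - 1) →
      ((n : ℝ) / ((n : ℝ) + 1)) * ν n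
        = ν (n - 1) * (Q (n - 1) n / Q (n - 1) (n - 1))) ∧
    (∀ n : ℕ, 1 ≤ n → 0 < ν (n - 1) →
      ν n = ((n : ℝ) + 1) * ν 0 * ∏ j ∈ Finset.range n, (Q j (j + 1) / Q j j)) := by
  have hsum : Summable ν := by
    by_contra h
    rw [tsum_eq_zero_of_not_summable h] at hν1
    norm_num at hν1
  have hTnn : ∀ n k, 0 ≤ T n k := by
    intro n k; rw [hT]; split
    · positivity
    · exact le_refl 0
  have hTle : ∀ n k, T n k ≤ 1 := by
    intro n k; rw [hT]; split
    · rw [div_le_one (by positivity)]; linarith [Nat.cast_nonneg (α := ℝ) n]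
    · norm_num
  have hsumT : ∀ m, Summable (fun n => ν n * T n m) := fun m =>
    hsum.of_nonneg_of_le (fun n => mul_nonneg (hν0 n) (hTnn n m))
      (fun n => by nlinarith [hν0 n, hTnn n m, hTle n m])
  have key : ∀ m : ℕ, 0 < ν m →
      (((m : ℝ) + 1)/((m : ℝ) + 2)) * ν (m+1) = ν m * (Q m (m+1) / Q m m) := by
    intro m hm
    have hν'pos : 0 < ν' m := by
      rw [hν' m]
      have h1 : ν m * T m m ≤ ∑' n, ν n * T n m :=
        Summable.le_tsum (hsumT m) m (fun n _ => mul_nonneg (hν0 n) (hTnn n m))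
      have h2 : 0 < ν m * T m m := by
        rw [hT]; simp only [le_refl, if_true]
        positivity
      linarith
    have e1 := hbal m m
    have e2 := hbal m (m+1)
    rw [hT, if_pos (le_refl m)] at e1
    rw [hT, if_pos (Nat.le_succ m)] at e2
    push_cast at e2
    have hν'ne : ν' m ≠ 0 := ne_of_gt hν'pos
    have hr : Q m (m+1) / Q m m
        = (ν (m+1) * (1/((m:ℝ)+1+1))) / (ν m * (1/((m:ℝ)+1))) := by
      rw [← e1, ← e2, mul_div_mul_left _ _ hν'ne]
    rw [hr]
    have hm0 : ν m ≠ 0 := ne_of_gt hm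
    have h1 : (m:ℝ)+1 ≠ 0 := by positivity
    have h2 : (m:ℝ)+2 ≠ 0 := by positivity
    field_simp
    ring
  constructor
  · intro n hn hpos
    obtain ⟨m, rfl⟩ := Nat.exists_eq_succ_of_ne_zero (by omega : n ≠ 0)
    simp only [Nat.succ_sub_one] at *
    have := key m hpos
    push_cast
    convert this using 2 <;> push_cast <;> ring
  · intro n hn hpos
    obtain ⟨m, rfl⟩ := Nat.exists_eq_succ_of_ne_zero (by omega : n ≠ 0)
    simp only [Nat.succ_sub_one] at hpos
    clear hn
    induction m with
    | zero =>
      simp only [Finset.prod_range_one]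
      have := key 0 hpos
      push_cast
      norm_num at this
      linarith
    | succ m ih =>
      have hm : 0 < ν m := by
        rcases lt_or_eq_of_le (hν0 m) with h | h
        · exact h
        · exact absurd (hsupp m (m+1) h.symm (by omega)) (ne_of_gt hpos)
      have ihv := ih hm
      have k := key (m+1) hpos
      set r := Q (m+1) (m+1+1) / Q (m+1) (m+1) with hrdef
      set P := ∏ j ∈ Finset.range (m+1), (Q j (j + 1) / Q j j) with hPdef
      rw [Finset.prod_range_succ, ← hPdef, ← hrdef]
      push_cast at k ihv ⊢
      have h2 : (m:ℝ)+2 ≠ 0 := by positivity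
      have h3 : (m:ℝ)+3 ≠ 0 := by positivity
      apply mul_left_cancel₀ h2
      rw [div_mul_eq_mul_div, div_eq_iff (by positivity : (m:ℝ)+1+2 ≠ 0)] at k
      simp only [Nat.succ_eq_add_one] at ihv ⊢
      rw [ihv] at k
      linear_combination k
end

section
/- Fix r ∈ ℕ with r ≥ 1, p ∈ (0,1) and q ∈ (0,1), and set p' = (1-q)p. Let ν be the negative binomial distribution with parameters r and p, ν_n = C(r+n-1, n) p^n (1-p)^r, and let T be the independent q-thinning matrix, T_{n,k} = C(n,k) q^k (1-q)^{n-k} for k ≤ n, T_{n,k} = 0 for k > n. Then (i) the thinning ν' = νT is the negative binomial distribution with parameters r and p̃ = qp/(1-p'), i.e. ν'_k = C(r+k-1, k) p̃^k (1-p̃)^r for all k; and (ii) the matrix Q defined by Q_{k,n} = C(r+n-1, n-k) · (p')^{n-k} · (1-p')^{r+k} for n ≥ k and Q_{k,n} = 0 for n < k satisfies the balance equations ν'_k · Q_{k,n} = ν_n · T_{n,k} for all k ≤ n; equivalently, the splitting matrix Υ_{k,l} = Q_{k,k+l} = C(r+k+l-1, l) (p')^l (1-p')^{r+k} is the negative binomial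 distribution with parameters r+k and p' in each row k. -/
lemma stmt13_aux (r k m : ℕ) (hr : 1 ≤ r) :
    (r + (m + k) - 1).choose (m + k) * (m + k).choose k
      = (r + k - 1).choose k * (m + (r + k - 1)).choose (r + k - 1) := by
  have h1 := Nat.choose_mul (n := r + m + k - 1) (k := m + k) (s := k) (by omega)
  have h2 := Nat.choose_mul (n := r + m + k - 1) (k := r + k - 1) (s := k) (by omega)
  have e1 : r + m + k - 1 - k = r + m - 1 := by omega
  have e2 : m + k - k = m := by omega
  have e3 : r + k - 1 - k = r - 1 := by omega
  have e4 : (r + m - 1).choose m = (r + m - 1).choose (r - 1) := by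
    rw [← Nat.choose_symm (show m ≤ r + m - 1 by omega)]; congr 1; omega
  rw [e1, e2] at h1
  rw [e1, e3] at h2
  rw [show r + (m + k) - 1 = r + m + k - 1 by omega,
    show m + (r + k - 1) = r + m + k - 1 by omega, h1, e4, ← h2]
  ring


/-- Negative binomial example: let `ν` be negative binomial with
parameters `r ≥ 1` and `p`, `T` the independent `q`-thinning, and `p' = (1-q)p`. Then
(i) the thinning `ν' = νT` is negative binomial with parameters `r` and
`p̃ = qp/(1-p')`; (ii) the matrix
`Q k n = C(r+n-1, n-k) p'^{n-k} (1-p')^{r+k}` for `n ≥ k` (and `0` for `n < k`) satisfies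
the balance equations `ν' k * Q k n = ν n * T n k` for all `k ≤ n`; equivalently, the
splitting matrix `Υ k l = Q k (k+l) = C(r+k+l-1, l) p'^l (1-p')^{r+k}` is negative binomial
with parameters `r+k` and `p'` in each row `k`. -/
theorem stmt13
    (r : ℕ) (hr : 1 ≤ r) (p q : ℝ)
    (hp : p ∈ Set.Ioo (0 : ℝ) 1) (hq : q ∈ Set.Ioo (0 : ℝ) 1)
    (p' : ℝ) (hp' : p' = (1 - q) * p)
    (pt : ℝ) (hpt : pt = q * p / (1 - p'))
    (ν : ℕ → ℝ)
    (hν : ∀ n : ℕ, ν n = ((r + n - 1).choose n : ℝ) * p ^ n * (1 - p) ^ r)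
    (T : ℕ → ℕ → ℝ)
    (hT : ∀ n k : ℕ, T n k =
      if k ≤ n then (n.choose k : ℝ) * q ^ k * (1 - q) ^ (n - k) else 0)
    (ν' : ℕ → ℝ) (hν' : ∀ k, ν' k = ∑' n, ν n * T n k)
    (Q : ℕ → ℕ → ℝ)
    (hQ : ∀ k n : ℕ, Q k n =
      if k ≤ n then
        ((r + n - 1).choose (n - k) : ℝ) * p' ^ (n - k) * (1 - p') ^ (r + k)
      else 0) :
    (∀ k : ℕ, ν' k = ((r + k - 1).choose k : ℝ) * pt ^ k * (1 - pt) ^ r) ∧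
    (∀ k n : ℕ, k ≤ n → ν' k * Q k n = ν n * T n k) ∧
    (∀ k l : ℕ,
      Q k (k + l) = ((r + k + l - 1).choose l : ℝ) * p' ^ l * (1 - p') ^ (r + k)) := by
  obtain ⟨hp0, hp1⟩ := hp
  obtain ⟨hq0, hq1⟩ := hq
  have hp'0 : 0 < p' := by rw [hp']; nlinarith
  have hp'1 : p' < 1 := by rw [hp']; nlinarith
  have hu0 : (0 : ℝ) < 1 - p' := by linarith
  have hnorm : ‖p'‖ < 1 := by rw [Real.norm_eq_abs, abs_lt]; constructor <;> linarith
  -- the key formula for ν'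
  have key : ∀ k : ℕ, ν' k =
      ((r + k - 1).choose k : ℝ) * (q * p) ^ k * (1 - p) ^ r / (1 - p') ^ (r + k) := by
    intro k
    set c : ℝ := ((r + k - 1).choose k : ℝ) * (q * p) ^ k * (1 - p) ^ r with hc
    have h1 := (hasSum_choose_mul_geometric_of_norm_lt_one (𝕜 := ℝ) (r + k - 1) hnorm).mul_left c
    have h0 : ∀ m : ℕ, c * (((m + (r + k - 1)).choose (r + k - 1) : ℝ) * p' ^ m)
        = ν (m + k) * T (m + k) k := by
      intro m
      rw [hν, hT, if_pos (Nat.le_add_left k m), Nat.add_sub_cancel, hc,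
        show p' ^ m = (1 - q) ^ m * p ^ m from by rw [hp', mul_pow],
        show r + (m + k) - 1 = r + m + k - 1 by omega]
      have hcast : ((r + m + k - 1).choose (m + k) : ℝ) * ((m + k).choose k : ℝ)
          = ((r + k - 1).choose k : ℝ) * ((m + (r + k - 1)).choose (r + k - 1) : ℝ) := by
        have := congrArg (Nat.cast : ℕ → ℝ) (stmt13_aux r k m hr)
        rw [show r + (m + k) - 1 = r + m + k - 1 by omega] at this
        exact_mod_cast this
      linear_combination (-(p ^ m * p ^ k * (1 - p) ^ r * q ^ k * (1 - q) ^ m)) * hcast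
    rw [funext h0] at h1
    have h2 := (hasSum_nat_add_iff (f := fun n => ν n * T n k) k).mp h1
    have h3 : ∑ i ∈ Finset.range k, ν i * T i k = 0 := by
      apply Finset.sum_eq_zero
      intro i hi
      rw [hT, if_neg (by simpa using Finset.mem_range.mp hi |>.not_ge ∘ id)]
      · ring
    rw [h3, add_zero] at h2
    rw [hν', h2.tsum_eq, show r + k - 1 + 1 = r + k by omega, hc, mul_one_div]
  refine ⟨?_, ?_, ?_⟩
  · -- part (i)
    intro k
    have hne : (1 : ℝ) - p' ≠ 0 := by linarith
    have h1pt : 1 - pt = (1 - p) / (1 - p') := by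
      rw [hpt]
      field_simp
      rw [hp']; ring
    rw [key k, h1pt, hpt, div_pow, div_pow, pow_add]
    field_simp
  · -- part (ii)
    intro k n hkn
    obtain ⟨m, rfl⟩ := Nat.exists_eq_add_of_le hkn
    have hcast : ((r + (k + m) - 1).choose (k + m) : ℝ) * ((k + m).choose k : ℝ)
        = ((r + k - 1).choose k : ℝ) * ((r + (k + m) - 1).choose m : ℝ) := by
      have h := stmt13_aux r k m hr
      have hs : (m + (r + k - 1)).choose (r + k - 1) = (r + (k + m) - 1).choose m := by
        rw [show m + (r + k - 1) = r + (k + m) - 1 by omega,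
          show r + k - 1 = r + (k + m) - 1 - m by omega,
          Nat.choose_symm (by omega)]
      rw [show m + k = k + m from Nat.add_comm m k, hs] at h
      exact_mod_cast congrArg (Nat.cast : ℕ → ℝ) h
    rw [key k, hQ, if_pos hkn, hν, hT, if_pos hkn, Nat.add_sub_cancel_left,
      show p' ^ m = (1 - q) ^ m * p ^ m from by rw [hp', mul_pow]]
    rw [div_mul_eq_mul_div, div_eq_iff (pow_ne_zero (r + k) (by linarith : (1 : ℝ) - p' ≠ 0))]
    linear_combination (-((1 - p') ^ (r + k) * p ^ m * p ^ k * (1 - p) ^ r * q ^ k * (1 - q) ^ m)) * hcast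
  · -- part (iii)
    intro k l
    rw [hQ, if_pos (Nat.le_add_right k l), Nat.add_sub_cancel_left,
      show r + (k + l) - 1 = r + k + l - 1 by omega]
end

section
/- Fix α > 1 and for s > 1, a > 0 write ζ_{s,a} = ∑_{j ≥ 0} (j+a)^{-s} (Hurwitz zeta sum). Let ν be the power law ν_n = ζ_{α,1}^{-1} (n+1)^{-α}, and let T be the uniform thinning matrix, T_{n,k} = 1/(n+1) for k ≤ n, T_{n,k} = 0 for k > n. Then (i) the thinning ν' = νT satisfies ν'_k = ζ_{α+1,k+1} / ζ_{α,1} for all k; (ii) the matrix Q defined by Q_{k,n} = (n+1)^{-(α+1)} / ζ_{α+1,k+1} for n ≥ k and Q_{k,n} = 0 for n < k is a condensation matrix for (ν, T): it is stochastic and satisfies ν'_k · Q_{k,n} = ν_n · T_{n,k} for all k, n; (iii) for every n ≥ 1, Q_{n-1,n} / Q_{n-1,n-1} = (n/(n+1))^{α+1}; and (iv) the splitting matrix satisfies Υ_{k,l} = Q_{k,k+l} = 1 / (ζ_{α+1,k+1} · (k+l+1)^{α+1}) for all k, l ≥ 0. -/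
/-- The Hurwitz zeta sum `ζ_{s,a} = ∑_{j ≥ 0} (j+a)^{-s}`. -/
noncomputable def hurwitzZetaSum (s a : ℝ) : ℝ :=
  ∑' j : ℕ, ((j : ℝ) + a) ^ (-s)

lemma hz_summable {s : ℝ} (hs : 1 < s) {a : ℝ} (ha : 1 ≤ a) :
    Summable (fun j : ℕ => ((j : ℝ) + a) ^ (-s)) := by
  have h1 : Summable (fun j : ℕ => ((j : ℝ) + 1) ^ (-s)) := by
    have h0 := (Real.summable_one_div_nat_rpow (p := s)).2 hs
    have h2 := (summable_nat_add_iff (f := fun n : ℕ => 1 / (n : ℝ) ^ s) 1).2 h0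
    refine h2.congr fun j => ?_
    push_cast
    rw [Real.rpow_neg (by positivity), one_div]
  refine h1.of_nonneg_of_le (fun j => Real.rpow_nonneg (by positivity) _) fun j => ?_
  exact Real.rpow_le_rpow_of_nonpos (by positivity) (by linarith) (by linarith)

lemma hz_pos {s : ℝ} (hs : 1 < s) {a : ℝ} (ha : 1 ≤ a) :
    0 < hurwitzZetaSum s a := by
  refine Summable.tsum_pos (hz_summable hs ha) (fun j => Real.rpow_nonneg (by positivity) _) 0 ?_
  exact Real.rpow_pos_of_pos (by linarith) _

lemma tsum_if_shift {s : ℝ} (hs : 1 < s) (k : ℕ) :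
    ∑' n : ℕ, (if k ≤ n then ((n : ℝ) + 1) ^ (-s) else 0)
      = hurwitzZetaSum s ((k : ℝ) + 1) := by
  have hsum : Summable (fun n : ℕ => if k ≤ n then ((n : ℝ) + 1) ^ (-s) else 0) := by
    have h1 : Summable (fun j : ℕ => ((j : ℝ) + 1) ^ (-s)) := hz_summable hs le_rfl
    refine h1.of_nonneg_of_le (fun n => ?_) fun n => ?_
    · split
      · exact Real.rpow_nonneg (by positivity) _
      · exact le_rfl
    · split
      · exact le_rfl
      · exact Real.rpow_nonneg (by positivity) _
  rw [← Summable.sum_add_tsum_nat_add k hsum]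
  have h0 : ∑ i ∈ Finset.range k, (if k ≤ i then ((i : ℝ) + 1) ^ (-s) else 0) = 0 :=
    Finset.sum_eq_zero fun i hi =>
      if_neg (Nat.not_le.mpr (Finset.mem_range.mp hi))
  rw [h0, zero_add, hurwitzZetaSum]
  refine tsum_congr fun i => ?_
  rw [if_pos (Nat.le_add_left k i)]
  push_cast
  ring_nf

/-- Power law example under uniform thinning: let `α > 1`,
`ν n = ζ_{α,1}⁻¹ (n+1)^{-α}`, and `T` the uniform thinning matrix. Then
(i) `ν' k = ζ_{α+1,k+1} / ζ_{α,1}`;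
(ii) `Q k n = (n+1)^{-(α+1)} / ζ_{α+1,k+1}` for `n ≥ k` (and `0` for `n < k`) is a
condensation matrix for `(ν, T)`;
(iii) `Q (n-1) n / Q (n-1) (n-1) = (n/(n+1))^{α+1}` for every `n ≥ 1`; and
(iv) the splitting matrix satisfies
`Υ k l = Q k (k+l) = 1 / (ζ_{α+1,k+1} (k+l+1)^{α+1})` for all `k l`. -/
theorem stmt14
    (α : ℝ) (hα : 1 < α)
    (ν : ℕ → ℝ)
    (hν : ∀ n : ℕ, ν n = (hurwitzZetaSum α 1)⁻¹ * ((n : ℝ) + 1) ^ (-α))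
    (T : ℕ → ℕ → ℝ)
    (hT : ∀ n k : ℕ, T n k = if k ≤ n then 1 / ((n : ℝ) + 1) else 0)
    (ν' : ℕ → ℝ) (hν' : ∀ k, ν' k = ∑' n, ν n * T n k)
    (Q : ℕ → ℕ → ℝ)
    (hQ : ∀ k n : ℕ, Q k n =
      if k ≤ n then
        ((n : ℝ) + 1) ^ (-(α + 1)) / hurwitzZetaSum (α + 1) ((k : ℝ) + 1)
      else 0) :
    (∀ k : ℕ, ν' k = hurwitzZetaSum (α + 1) ((k : ℝ) + 1) / hurwitzZetaSum α 1) ∧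
    ((∀ k n, 0 ≤ Q k n) ∧ (∀ k, ∑' n, Q k n = 1) ∧
      (∀ k n, ν' k * Q k n = ν n * T n k)) ∧
    (∀ n : ℕ, 1 ≤ n →
      Q (n - 1) n / Q (n - 1) (n - 1) = ((n : ℝ) / ((n : ℝ) + 1)) ^ (α + 1)) ∧
    (∀ k l : ℕ,
      Q k (k + l) =
        1 / (hurwitzZetaSum (α + 1) ((k : ℝ) + 1) * ((k : ℝ) + (l : ℝ) + 1) ^ (α + 1))) := by
  have hα1 : 1 < α + 1 := by linarith
  -- Key pointwise identity: ν n * T n k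
  have hnuT : ∀ k n : ℕ, ν n * T n k =
      (hurwitzZetaSum α 1)⁻¹ * (if k ≤ n then ((n : ℝ) + 1) ^ (-(α + 1)) else 0) := by
    intro k n
    rw [hν, hT]
    have hn1 : (0 : ℝ) < (n : ℝ) + 1 := by positivity
    split
    · rw [neg_add, Real.rpow_add hn1, Real.rpow_neg_one]
      ring
    · ring
  have hi : ∀ k : ℕ, ν' k = hurwitzZetaSum (α + 1) ((k : ℝ) + 1) / hurwitzZetaSum α 1 := by
    intro k
    rw [hν']
    calc ∑' n, ν n * T n k
        = ∑' n, (hurwitzZetaSum α 1)⁻¹ *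
            (if k ≤ n then ((n : ℝ) + 1) ^ (-(α + 1)) else 0) := by
          exact tsum_congr fun n => hnuT k n
      _ = (hurwitzZetaSum α 1)⁻¹ *
            ∑' n, (if k ≤ n then ((n : ℝ) + 1) ^ (-(α + 1)) else 0) := tsum_mul_left
      _ = (hurwitzZetaSum α 1)⁻¹ * hurwitzZetaSum (α + 1) ((k : ℝ) + 1) := by
          rw [tsum_if_shift hα1]
      _ = _ := by rw [inv_mul_eq_div]
  have hζk : ∀ k : ℕ, 0 < hurwitzZetaSum (α + 1) ((k : ℝ) + 1) := fun k =>
    hz_pos hα1 (le_add_of_nonneg_left (Nat.cast_nonneg k))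
  refine ⟨hi, ⟨?_, ?_, ?_⟩, ?_, ?_⟩
  · -- nonnegativity of Q
    intro k n
    rw [hQ]
    split
    · exact div_nonneg (Real.rpow_nonneg (by positivity) _) (hζk k).le
    · exact le_rfl
  · -- Q stochastic
    intro k
    calc ∑' n, Q k n
        = ∑' n, (if k ≤ n then ((n : ℝ) + 1) ^ (-(α + 1)) else 0) *
            (hurwitzZetaSum (α + 1) ((k : ℝ) + 1))⁻¹ := by
          refine tsum_congr fun n => ?_
          rw [hQ]
          split
          · rw [div_eq_mul_inv]
          · rw [zero_mul]
      _ = (∑' n, (if k ≤ n then ((n : ℝ) + 1) ^ (-(α + 1)) else 0)) *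
            (hurwitzZetaSum (α + 1) ((k : ℝ) + 1))⁻¹ := tsum_mul_right
      _ = 1 := by
          rw [tsum_if_shift hα1, mul_inv_cancel₀ (hζk k).ne']
  · -- balance equations
    intro k n
    rw [hi, hQ, hnuT]
    have hζα := hz_pos hα (le_refl 1)
    split
    · rw [div_mul_div_comm, mul_comm (hurwitzZetaSum α 1),
        mul_div_mul_left _ _ (hζk k).ne', inv_mul_eq_div]
    · simp
  · -- ratio
    intro n hn
    rw [hQ, hQ, if_pos (Nat.sub_le n 1), if_pos le_rfl]
    have hcast : ((n - 1 : ℕ) : ℝ) = (n : ℝ) - 1 := by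
      have := Nat.cast_sub hn (R := ℝ)
      simpa using this
    rw [hcast]
    have hn0 : (0 : ℝ) < (n : ℝ) := by exact_mod_cast hn
    have hn1 : (0 : ℝ) < (n : ℝ) + 1 := by linarith
    have h : (n : ℝ) - 1 + 1 = (n : ℝ) := by ring
    rw [h, Real.div_rpow hn0.le hn1.le, Real.rpow_neg hn1.le, Real.rpow_neg hn0.le]
    have hr1 : (0:ℝ) < ((n:ℝ)+1) ^ (α+1) := Real.rpow_pos_of_pos hn1 _
    have hr0 : (0:ℝ) < (n:ℝ) ^ (α+1) := Real.rpow_pos_of_pos hn0 _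
    have hζ := (hζk (n-1)).ne'
    rw [hcast, h] at hζ
    field_simp
  · -- splitting matrix
    intro k l
    rw [hQ, if_pos (Nat.le_add_right k l)]
    push_cast
    rw [Real.rpow_neg (by positivity), div_eq_mul_inv, one_div, mul_inv]
    ring
end

section
/- Let Y be a standard Borel (measurable) space, P a probability measure on Y, T a Markov kernel from Y to Y, and P' the measure on Y given by P'(A) = ∫ T_μ(A) P(dμ). Let Q be a Markov kernel from Y to Y satisfying the disintegration property: for every measurable f : Y × Y → [0,∞], ∫∫ f(η, μ) T_μ(dη) P(dμ) = ∫∫ f(η, μ) Q_η(dμ) P'(dη). Then for every measurable g : Y × Y × Y × Y → [0,∞] the alternating cycle identity holds: ∫∫∫∫ g(κ, μ, λ, ν) · T_ν({κ}) Q_λ(dν) T_μ(dλ) Q_κ(dμ) P'(dκ) = ∫∫∫∫ g(κ, μ, λ, ν) · T_μ({κ}) Q_λ(dμ) T_ν(dλ) Q_κ(dν) P'(dκ). -/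
open MeasureTheory ProbabilityTheory
open scoped ENNReal

section Aux

variable {Y : Type*} [MeasurableSpace Y] [StandardBorelSpace Y]

lemma diag_meas17 : MeasurableSet {p : Y × Y | p.1 = p.2} := by
  letI := upgradeStandardBorel Y
  exact isClosed_diagonal.measurableSet

lemma singleton_meas17 (a : Y) : MeasurableSet ({a} : Set Y) := by
  letI := upgradeStandardBorel Y
  exact measurableSet_singleton a

lemma kernel_singleton_meas17 (T : Kernel Y Y) [IsSFiniteKernel T] :
    Measurable fun p : Y × Y => T p.1 {p.2} := by
  have ht : MeasurableSet {q : (Y × Y) × Y | q.1.2 = q.2} := by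
    have : {q : (Y × Y) × Y | q.1.2 = q.2}
        = (fun q : (Y × Y) × Y => (q.1.2, q.2)) ⁻¹' {p : Y × Y | p.1 = p.2} := rfl
    rw [this]
    exact (measurable_fst.snd.prodMk measurable_snd) diag_meas17
  have h := Kernel.measurable_kernel_prodMk_left
    (κ := T.comap Prod.fst measurable_fst) ht
  have hset : ∀ a : Y × Y,
      (Prod.mk a ⁻¹' {q : (Y × Y) × Y | q.1.2 = q.2}) = ({a.2} : Set Y) := by
    intro a; ext y; simp [eq_comm]
  simp only [Kernel.comap_apply, hset] at h
  exact h

lemma atom_swap17 (m₁ m₂ : Measure Y) [IsFiniteMeasure m₁] [IsFiniteMeasure m₂]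
    {φ : Y → ℝ≥0∞} (hφ : Measurable φ) :
    ∫⁻ κ, φ κ * m₂ {κ} ∂m₁ = ∫⁻ κ, φ κ * m₁ {κ} ∂m₂ := by
  have hind : Measurable fun p : Y × Y =>
      ({p : Y × Y | p.1 = p.2}).indicator (fun p => φ p.1) p :=
    (hφ.comp measurable_fst).indicator diag_meas17
  have h1 : ∀ (m : Measure Y) (κ : Y),
      ∫⁻ κ', ({p : Y × Y | p.1 = p.2}).indicator (fun p => φ p.1) (κ, κ') ∂m
        = φ κ * m {κ} := by
    intro m κ
    have he : ∀ κ', ({p : Y × Y | p.1 = p.2}).indicator (fun p => φ p.1) (κ, κ')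
        = ({κ} : Set Y).indicator (fun _ => φ κ) κ' := by
      intro κ'
      rcases eq_or_ne κ κ' with h | h
      · subst h; simp [Set.indicator_apply]
      · simp [Set.indicator_apply, h, h.symm]
    simp_rw [he]
    rw [lintegral_indicator_const (singleton_meas17 κ)]
  have h2 : ∀ (m : Measure Y) (κ' : Y),
      ∫⁻ κ, ({p : Y × Y | p.1 = p.2}).indicator (fun p => φ p.1) (κ, κ') ∂m
        = φ κ' * m {κ'} := by
    intro m κ'
    have he : ∀ κ, ({p : Y × Y | p.1 = p.2}).indicator (fun p => φ p.1) (κ, κ')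
        = ({κ'} : Set Y).indicator (fun _ => φ κ') κ := by
      intro κ
      rcases eq_or_ne κ κ' with h | h
      · subst h; simp [Set.indicator_apply]
      · simp [Set.indicator_apply, h]
    simp_rw [he]
    rw [lintegral_indicator_const (singleton_meas17 κ')]
  calc ∫⁻ κ, φ κ * m₂ {κ} ∂m₁
      = ∫⁻ κ, ∫⁻ κ', ({p : Y × Y | p.1 = p.2}).indicator (fun p => φ p.1) (κ, κ') ∂m₂ ∂m₁ := by
        simp_rw [h1]
    _ = ∫⁻ κ', ∫⁻ κ, ({p : Y × Y | p.1 = p.2}).indicator (fun p => φ p.1) (κ, κ') ∂m₁ ∂m₂ :=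
        lintegral_lintegral_swap hind.aemeasurable
    _ = ∫⁻ κ', φ κ' * m₁ {κ'} ∂m₂ := by simp_rw [h2]

lemma meas_lint17 {α β γ : Type*} [MeasurableSpace α] [MeasurableSpace β] [MeasurableSpace γ]
    (κ : Kernel γ β) [IsSFiniteKernel κ] {j : α → γ} (hj : Measurable j)
    {f : α → β → ℝ≥0∞} (hf : Measurable fun p : α × β => f p.1 p.2) :
    Measurable fun a => ∫⁻ b, f a b ∂(κ (j a)) := by
  have h := Measurable.lintegral_kernel_prod_right'
    (κ := κ.comap j hj) (f := fun p : α × β => f p.1 p.2) hf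
  simpa [Kernel.comap_apply] using h

end Aux

/-- Alternating cycle condition for kernels on a standard Borel space:
let `P` be a probability measure on `Y`, `T` a Markov kernel, `P'` the image of `P` under
`T`, and `Q` a Markov kernel satisfying the disintegration property
`∫∫ f(η,μ) T_μ(dη) P(dμ) = ∫∫ f(η,μ) Q_η(dμ) P'(dη)`. Then for every measurable
`g : Y⁴ → [0,∞]`,
`∫∫∫∫ g(κ,μ,λ,ν) T_ν({κ}) Q_λ(dν) T_μ(dλ) Q_κ(dμ) P'(dκ)
  = ∫∫∫∫ g(κ,μ,λ,ν) T_μ({κ}) Q_λ(dμ) T_ν(dλ) Q_κ(dν) P'(dκ)`. -/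
theorem stmt17 {Y : Type*} [MeasurableSpace Y] [StandardBorelSpace Y]
    (P P' : Measure Y) [IsProbabilityMeasure P]
    (T Q : Kernel Y Y) [IsMarkovKernel T] [IsMarkovKernel Q]
    (hP' : ∀ A : Set Y, MeasurableSet A → P' A = ∫⁻ μ, T μ A ∂P)
    (hdis : ∀ f : Y → Y → ℝ≥0∞, Measurable (Function.uncurry f) →
      ∫⁻ μ, ∫⁻ η, f η μ ∂(T μ) ∂P = ∫⁻ η, ∫⁻ μ, f η μ ∂(Q η) ∂P')
    (g : Y → Y → Y → Y → ℝ≥0∞)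
    (hg : Measurable fun p : Y × Y × Y × Y => g p.1 p.2.1 p.2.2.1 p.2.2.2) :
    ∫⁻ κ, ∫⁻ μ, ∫⁻ l, ∫⁻ ν, g κ μ l ν * T ν {κ} ∂(Q l) ∂(T μ) ∂(Q κ) ∂P'
      = ∫⁻ κ, ∫⁻ ν, ∫⁻ l, ∫⁻ μ, g κ μ l ν * T μ {κ} ∂(Q l) ∂(T ν) ∂(Q κ) ∂P' := by
  have hT1 : Measurable fun p : Y × Y => T p.1 {p.2} := kernel_singleton_meas17 T
  have hA : Measurable fun p : Y × Y × Y × Y =>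
      g p.1 p.2.1 p.2.2.1 p.2.2.2 * T p.2.2.2 {p.1} :=
    hg.mul (hT1.comp (measurable_snd.snd.snd.prodMk measurable_fst))
  have hB : Measurable fun p : Y × Y × Y × Y =>
      g p.1 p.2.1 p.2.2.1 p.2.2.2 * T p.2.1 {p.1} :=
    hg.mul (hT1.comp (measurable_snd.fst.prodMk measurable_fst))
  calc
    ∫⁻ κ, ∫⁻ μ, ∫⁻ l, ∫⁻ ν, g κ μ l ν * T ν {κ} ∂(Q l) ∂(T μ) ∂(Q κ) ∂P'
      = ∫⁻ μ, ∫⁻ κ, ∫⁻ l, ∫⁻ ν, g κ μ l ν * T ν {κ} ∂(Q l) ∂(T μ) ∂(T μ) ∂P := by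
        refine (hdis (fun κ μ => ∫⁻ l, ∫⁻ ν, g κ μ l ν * T ν {κ} ∂(Q l) ∂(T μ)) ?_).symm
        refine meas_lint17 T measurable_snd ?_
        refine meas_lint17 Q measurable_snd ?_
        exact hA.comp (by fun_prop : Measurable fun r : ((Y × Y) × Y) × Y =>
          (r.1.1.1, r.1.1.2, r.1.2, r.2))
    _ = ∫⁻ μ, ∫⁻ l, ∫⁻ κ, ∫⁻ ν, g κ μ l ν * T ν {κ} ∂(Q l) ∂(T μ) ∂(T μ) ∂P := by
        refine lintegral_congr fun μ => ?_
        refine lintegral_lintegral_swap ?_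
        refine Measurable.aemeasurable ?_
        refine meas_lint17 Q measurable_snd (f := fun p : Y × Y => fun ν =>
          g p.1 μ p.2 ν * T ν {p.1}) ?_
        exact hA.comp (by fun_prop : Measurable fun q : (Y × Y) × Y =>
          (q.1.1, μ, q.1.2, q.2))
    _ = ∫⁻ μ, ∫⁻ l, ∫⁻ ν, ∫⁻ κ, g κ μ l ν * T ν {κ} ∂(T μ) ∂(Q l) ∂(T μ) ∂P := by
        refine lintegral_congr fun μ => lintegral_congr fun l => ?_
        refine lintegral_lintegral_swap ?_
        exact (hA.comp (by fun_prop : Measurable fun p : Y × Y =>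
          (p.1, μ, l, p.2))).aemeasurable
    _ = ∫⁻ μ, ∫⁻ l, ∫⁻ ν, ∫⁻ κ, g κ μ l ν * T μ {κ} ∂(T ν) ∂(Q l) ∂(T μ) ∂P := by
        refine lintegral_congr fun μ => lintegral_congr fun l => lintegral_congr fun ν => ?_
        exact atom_swap17 (T μ) (T ν) (hg.comp
          (by fun_prop : Measurable fun κ : Y => (κ, μ, l, ν)))
    _ = ∫⁻ l, ∫⁻ μ, ∫⁻ ν, ∫⁻ κ, g κ μ l ν * T μ {κ} ∂(T ν) ∂(Q l) ∂(Q l) ∂P' := by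
        refine hdis (fun l μ => ∫⁻ ν, ∫⁻ κ, g κ μ l ν * T μ {κ} ∂(T ν) ∂(Q l)) ?_
        refine meas_lint17 Q measurable_fst ?_
        refine meas_lint17 T measurable_snd ?_
        exact hB.comp (by fun_prop : Measurable fun r : ((Y × Y) × Y) × Y =>
          (r.2, r.1.1.2, r.1.1.1, r.1.2))
    _ = ∫⁻ l, ∫⁻ ν, ∫⁻ μ, ∫⁻ κ, g κ μ l ν * T μ {κ} ∂(T ν) ∂(Q l) ∂(Q l) ∂P' := by
        refine lintegral_congr fun l => ?_
        refine lintegral_lintegral_swap ?_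
        refine Measurable.aemeasurable ?_
        refine meas_lint17 T measurable_snd (f := fun p : Y × Y => fun κ =>
          g κ p.1 l p.2 * T p.1 {κ}) ?_
        exact hB.comp (by fun_prop : Measurable fun q : (Y × Y) × Y =>
          (q.2, q.1.1, l, q.1.2))
    _ = ∫⁻ l, ∫⁻ ν, ∫⁻ κ, ∫⁻ μ, g κ μ l ν * T μ {κ} ∂(Q l) ∂(T ν) ∂(Q l) ∂P' := by
        refine lintegral_congr fun l => lintegral_congr fun ν => ?_
        refine lintegral_lintegral_swap ?_
        exact (hB.comp (by fun_prop : Measurable fun p : Y × Y =>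
          (p.2, p.1, l, ν))).aemeasurable
    _ = ∫⁻ ν, ∫⁻ l, ∫⁻ κ, ∫⁻ μ, g κ μ l ν * T μ {κ} ∂(Q l) ∂(T ν) ∂(T ν) ∂P := by
        refine (hdis (fun l ν => ∫⁻ κ, ∫⁻ μ, g κ μ l ν * T μ {κ} ∂(Q l) ∂(T ν)) ?_).symm
        refine meas_lint17 T measurable_snd ?_
        refine meas_lint17 Q measurable_fst.fst ?_
        exact hB.comp (by fun_prop : Measurable fun r : ((Y × Y) × Y) × Y =>
          (r.1.2, r.2, r.1.1.1, r.1.1.2))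
    _ = ∫⁻ ν, ∫⁻ κ, ∫⁻ l, ∫⁻ μ, g κ μ l ν * T μ {κ} ∂(Q l) ∂(T ν) ∂(T ν) ∂P := by
        refine lintegral_congr fun ν => ?_
        refine lintegral_lintegral_swap ?_
        refine Measurable.aemeasurable ?_
        refine meas_lint17 Q measurable_fst (f := fun p : Y × Y => fun μ =>
          g p.2 μ p.1 ν * T μ {p.2}) ?_
        exact hB.comp (by fun_prop : Measurable fun q : (Y × Y) × Y =>
          (q.1.2, q.2, q.1.1, ν))
    _ = ∫⁻ κ, ∫⁻ ν, ∫⁻ l, ∫⁻ μ, g κ μ l ν * T μ {κ} ∂(Q l) ∂(T ν) ∂(Q κ) ∂P' := by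
        refine hdis (fun κ ν => ∫⁻ l, ∫⁻ μ, g κ μ l ν * T μ {κ} ∂(Q l) ∂(T ν)) ?_
        refine meas_lint17 T measurable_snd ?_
        refine meas_lint17 Q measurable_snd ?_
        exact hB.comp (by fun_prop : Measurable fun r : ((Y × Y) × Y) × Y =>
          (r.1.1.1, r.2, r.1.2, r.1.1.2))
end
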